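/- Let d ≥ 1 be an integer and set q* = 1/(d+1). Let t : ℝ → ℝ be differentiable at q* with t(q*) = 1/(d+1), and suppose that for all q in some neighborhood of q* the identity q^d + q^{d−1} t(q) + q^{d−2} t(q)^2 + ⋯ + t(q)^d = q^{d−1} holds. Then t'(q*) = (d−2)/d. -/

import Mathlib

/-- In the symmetric case `q* = t_{q*} = 1/(d+1)` for `p(x) = 1 + x + ⋯ + x^d`,
the implicit derivative of `t_q` at `q*` equals `(d−2)/d`. -/
theorem implicit_derivative_symmetric_case
    (d : ℕ) (hd : 1 ≤ d) (t : ℝ → ℝ)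
    (ht : DifferentiableAt ℝ t (1 / ((d : ℝ) + 1)))
    (ht0 : t (1 / ((d : ℝ) + 1)) = 1 / ((d : ℝ) + 1))
    (heq : ∀ᶠ q in nhds (1 / ((d : ℝ) + 1)),
      ∑ i ∈ Finset.range (d + 1), q ^ (d - i) * t q ^ i = q ^ (d - 1)) :
    deriv t (1 / ((d : ℝ) + 1)) = ((d : ℝ) - 2) / (d : ℝ) := by
  set q : ℝ := 1 / ((d : ℝ) + 1) with hq
  have hd1 : (0:ℝ) < (d:ℝ) + 1 := by positivity
  have hqpos : 0 < q := by rw [hq]; positivity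
  have hq0 : q ≠ 0 := ne_of_gt hqpos
  have hqinv : q * ((d:ℝ) + 1) = 1 := by
    rw [hq]; field_simp
  set t' := deriv t q with ht'
  have hder : HasDerivAt t t' q := ht.hasDerivAt
  have hsum : HasDerivAt (fun x => ∑ i ∈ Finset.range (d+1), x ^ (d - i) * t x ^ i)
      (∑ i ∈ Finset.range (d+1), ((↑(d - i) * q ^ (d - i - 1)) * t q ^ i
        + q ^ (d - i) * (↑i * t q ^ (i-1) * t'))) q := by
    apply HasDerivAt.fun_sum
    intro i hi
    exact (hasDerivAt_pow (d - i) q).mul (hder.pow i)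
  have hRHS : HasDerivAt (fun x : ℝ => x ^ (d-1)) (↑(d-1) * q ^ (d-1-1)) q :=
    hasDerivAt_pow _ _
  have hcongr : HasDerivAt (fun x => ∑ i ∈ Finset.range (d+1), x ^ (d - i) * t x ^ i)
      (↑(d-1) * q ^ (d-1-1)) q :=
    hRHS.congr_of_eventuallyEq heq
  have hmain := hsum.unique hcongr
  rw [ht0] at hmain
  -- simplify each summand
  have hterm : ∀ i ∈ Finset.range (d+1),
      (↑(d - i) * q ^ (d - i - 1)) * q ^ i + q ^ (d - i) * (↑i * q ^ (i-1) * t')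
        = ((d:ℝ) - i) * q ^ (d-1) + (i:ℝ) * q ^ (d-1) * t' := by
    intro i hi
    have hid : i ≤ d := by
      have := Finset.mem_range.mp hi; omega
    have h1 : (↑(d - i) * q ^ (d - i - 1)) * q ^ i = ((d:ℝ) - i) * q ^ (d-1) := by
      by_cases h : i = d
      · subst h; simp [Nat.sub_self]
      · have hpow : q ^ (d - i - 1) * q ^ i = q ^ (d-1) := by
          rw [← pow_add]; congr 1; omega
        rw [mul_assoc, hpow, Nat.cast_sub hid]
    have h2 : q ^ (d - i) * (↑i * q ^ (i-1) * t') = (i:ℝ) * q ^ (d-1) * t' := by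
      by_cases h : i = 0
      · subst h; simp
      · have hpow : q ^ (d - i) * q ^ (i-1) = q ^ (d-1) := by
          rw [← pow_add]; congr 1; omega
        calc q ^ (d - i) * (↑i * q ^ (i-1) * t')
            = (i:ℝ) * (q ^ (d - i) * q ^ (i-1)) * t' := by ring
          _ = (i:ℝ) * q ^ (d-1) * t' := by rw [hpow]
    rw [h1, h2]
  rw [Finset.sum_congr rfl hterm] at hmain
  rw [Finset.sum_add_distrib, ← Finset.sum_mul, ← Finset.sum_mul, ← Finset.sum_mul] at hmain
  have hG : (∑ i ∈ Finset.range (d+1), (i:ℝ)) = d * (d+1) / 2 := by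
    have h := Finset.sum_range_id_mul_two (d+1)
    have h' : ((∑ i ∈ Finset.range (d+1), i : ℕ) : ℝ) * 2 = ((d+1) * d : ℕ) := by
      exact_mod_cast congrArg (Nat.cast : ℕ → ℝ) h
    push_cast at h'
    linarith
  have hG2 : (∑ i ∈ Finset.range (d+1), ((d:ℝ) - i)) = d * (d+1) / 2 := by
    rw [Finset.sum_sub_distrib, Finset.sum_const, Finset.card_range, hG]
    ring
  rw [hG, hG2] at hmain
  -- handle RHS: ↑(d-1) * q^(d-1-1) = ((d:ℝ)-1) * ((d:ℝ)+1) * q^(d-1)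
  have hrhs : (↑(d-1) : ℝ) * q ^ (d-1-1) = ((d:ℝ) - 1) * ((d:ℝ) + 1) * q ^ (d-1) := by
    by_cases h : d = 1
    · subst h; norm_num
    · have hd2 : 2 ≤ d := by omega
      have hpow : q ^ (d-1) = q ^ (d-1-1) * q := by
        rw [← pow_succ]; congr 1; omega
      rw [Nat.cast_sub hd, hpow]
      push_cast
      calc ((d:ℝ) - 1) * q ^ (d-1-1)
          = ((d:ℝ) - 1) * q ^ (d-1-1) * (q * ((d:ℝ)+1)) := by rw [hqinv]; ring
        _ = ((d:ℝ) - 1) * ((d:ℝ) + 1) * (q ^ (d-1-1) * q) := by ring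
  rw [hrhs] at hmain
  -- cancel q^(d-1)
  have hqd : q ^ (d-1) ≠ 0 := pow_ne_zero _ hq0
  have hdr0 : (d:ℝ) ≠ 0 := by positivity
  have hlin : (d:ℝ) * ((d:ℝ)+1) / 2 * (1 + t') = ((d:ℝ) - 1) * ((d:ℝ) + 1) := by
    apply mul_right_cancel₀ hqd
    linear_combination hmain
  rw [ht', hq] at *
  rw [eq_div_iff hdr0]
  nlinarith [hlin, hd1]
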